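/- If G is a connected bipartite graph with at least one edge, then the connected Grundy number of G equals 2. -/

import Mathlib

open SimpleGraph

/-- First-fit coloring along a vertex sequence: each vertex in turn receives the
smallest positive integer not used on its already-colored neighbors. Uncolored
vertices have color `0`. -/
noncomputable def firstFit {V : Type*} [DecidableEq V] (G : SimpleGraph V) (l : List V) :
    V → ℕ :=
  l.foldl (fun c v => Function.update c v
    (sInf {k | 0 < k ∧ ∀ u, G.Adj v u → c u ≠ k})) (fun _ => 0)

/-- `l` is an ordering of all vertices. -/
def IsOrdering {V : Type*} (l : List V) : Prop := l.Nodup ∧ ∀ v : V, v ∈ l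

/-- `l` is a connected ordering: every vertex after the first has a neighbor earlier. -/
def IsConnectedOrdering {V : Type*} (G : SimpleGraph V) (l : List V) : Prop :=
  IsOrdering l ∧ ∀ i (hi : i < l.length), 0 < i → ∃ u ∈ l.take i, G.Adj u (l.get ⟨i, hi⟩)

/-- Number of colors used by first-fit along `l`. -/
noncomputable def numColors {V : Type*} [Fintype V] [DecidableEq V] (G : SimpleGraph V)
    (l : List V) : ℕ :=
  Finset.univ.sup (firstFit G l)

/-- The Grundy number: maximum number of first-fit colors over all vertex orderings. -/
noncomputable def grundy {V : Type*} [Fintype V] [DecidableEq V] (G : SimpleGraph V) : ℕ :=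
  sSup {k | ∃ l : List V, IsOrdering l ∧ k = numColors G l}

/-- The connected Grundy number: maximum number of first-fit colors over connected orderings. -/
noncomputable def connGrundy {V : Type*} [Fintype V] [DecidableEq V] (G : SimpleGraph V) : ℕ :=
  sSup {k | ∃ l : List V, IsConnectedOrdering G l ∧ k = numColors G l}

private lemma fin2_eq (a b c : Fin 2) (h1 : a ≠ c) (h2 : b ≠ c) : a = b := by
  fin_cases a <;> fin_cases b <;> fin_cases c <;> simp_all

private lemma firstFit_concat {V : Type*} [DecidableEq V] (G : SimpleGraph V)
    (l : List V) (v : V) :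
    firstFit G (l ++ [v]) = Function.update (firstFit G l) v
      (sInf {k | 0 < k ∧ ∀ u, G.Adj v u → firstFit G l u ≠ k}) := by
  simp [firstFit, List.foldl_append]

/-- Value of first-fit along a connected prefix in a 2-colored graph. -/
private lemma ff_val {V : Type*} [DecidableEq V] (G : SimpleGraph V)
    (C : V → Fin 2) (hC : ∀ {a b}, G.Adj a b → C a ≠ C b) :
    ∀ (p : List V) (hp : p ≠ []), p.Nodup →
      (∀ i (hi : i < p.length), 0 < i → ∃ u ∈ p.take i, G.Adj u (p.get ⟨i, hi⟩)) →
      ∀ v, firstFit G p v = if v ∈ p then (if C v = C (p.head hp) then 1 else 2) else 0 := by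
  intro p
  induction p using List.reverseRecOn with
  | nil => intro hp; exact absurd rfl hp
  | append_singleton q v ih =>
    intro hp hnd hconn w
    rcases eq_or_ne q [] with hq | hq
    · subst hq
      simp only [List.nil_append] at *
      have h1 : (1 : ℕ) ∈ {k | 0 < k ∧ ∀ u, G.Adj v u → firstFit G [] u ≠ k} := by
        refine ⟨one_pos, fun u _ => ?_⟩
        simp [firstFit]
      have hinf : sInf {k | 0 < k ∧ ∀ u, G.Adj v u → firstFit G [] u ≠ k} = 1 := by
        have hle := Nat.sInf_le h1
        have hmem := (Nat.sInf_mem ⟨1, h1⟩).1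
        omega
      have hFF := firstFit_concat G [] v
      simp only [List.nil_append] at hFF
      rcases eq_or_ne w v with rfl | hwv
      · rw [hFF, Function.update_self]
        simp [hinf]
      · rw [hFF, Function.update_of_ne hwv]
        simp [firstFit, hwv]
    · -- q is nonempty
      have hqnd : q.Nodup := (List.nodup_append.mp hnd).1
      have hvq : v ∉ q := fun h =>
        (List.nodup_append'.mp hnd).2.2 h (List.mem_singleton_self v)
      have hqconn : ∀ i (hi : i < q.length), 0 < i →
          ∃ u ∈ q.take i, G.Adj u (q.get ⟨i, hi⟩) := by
        intro i hi hi0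
        have hi' : i < (q ++ [v]).length := by simp; omega
        obtain ⟨u, hu, hadj⟩ := hconn i hi' hi0
        rw [List.take_append_of_le_length hi.le] at hu
        refine ⟨u, hu, ?_⟩
        have : (q ++ [v]).get ⟨i, hi'⟩ = q.get ⟨i, hi⟩ := by
          simp [List.get_eq_getElem, List.getElem_append_left hi]
        rwa [this] at hadj
      have hhead : (q ++ [v]).head hp = q.head hq := by
        rw [List.head_append]
        simp [hq]
      have IH := ih hq hqnd hqconn
      set b := C (q.head hq) with hb
      -- v has a neighbor in q
      have hql : 0 < q.length := List.length_pos_iff.mpr hq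
      obtain ⟨x, hxq, hxadj⟩ := hconn q.length (by simp) hql
      rw [List.take_append_of_le_length le_rfl, List.take_length] at hxq
      have hgetv : (q ++ [v]).get ⟨q.length, by simp⟩ = v := by
        simp [List.get_eq_getElem]
      rw [hgetv] at hxadj
      rw [firstFit_concat, hhead]
      rcases eq_or_ne w v with rfl | hwv
      · rw [Function.update_self]
        rcases eq_or_ne (C w) b with hcv | hcv
        · -- color 1
          have h1 : (1 : ℕ) ∈ {k | 0 < k ∧ ∀ u, G.Adj w u → firstFit G q u ≠ k} := by
            refine ⟨one_pos, fun u hu => ?_⟩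
            rw [IH u]
            have : C u ≠ b := by rw [← hcv]; exact fun hh => hC hu hh.symm
            split_ifs <;> simp_all
          have hle := Nat.sInf_le h1
          have hmem := (Nat.sInf_mem ⟨1, h1⟩).1
          have hinf : sInf {k | 0 < k ∧ ∀ u, G.Adj w u → firstFit G q u ≠ k} = 1 := by omega
          simp [hinf, hcv, hb]
        · -- color 2
          have key : ∀ u, G.Adj w u → firstFit G q u ≠ 2 := by
            intro u hu
            rw [IH u]
            have hub : u ∈ q → C u = b := fun _ =>
              fin2_eq (C u) b (C w) (hC hu).symm (Ne.symm hcv)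
            split_ifs <;> simp_all
          have h2 : (2 : ℕ) ∈ {k | 0 < k ∧ ∀ u, G.Adj w u → firstFit G q u ≠ k} :=
            ⟨by omega, key⟩
          have h1not : (1 : ℕ) ∉ {k | 0 < k ∧ ∀ u, G.Adj w u → firstFit G q u ≠ k} := by
            intro h1
            have := h1.2 x hxadj.symm
            rw [IH x] at this
            have hcx : C x = b := fin2_eq (C x) b (C w) (hC hxadj) (Ne.symm hcv)
            simp [hxq, hcx] at this
          have hle := Nat.sInf_le h2
          have hmem := Nat.sInf_mem ⟨2, h2⟩
          have hne1 : sInf {k | 0 < k ∧ ∀ u, G.Adj w u → firstFit G q u ≠ k} ≠ 1 := by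
            intro h; rw [h] at hmem; exact h1not hmem
          simp only [List.mem_append, List.mem_singleton, or_true, if_true, ← hb, if_neg hcv]
          have := hmem.1
          omega
      · rw [Function.update_of_ne hwv, IH w]
        simp [List.mem_append, hwv, hb]

private lemma numColors_eq_two {V : Type*} [Fintype V] [DecidableEq V] (G : SimpleGraph V)
    (hb : G.Colorable 2) (he : ∃ u v : V, G.Adj u v) (l : List V)
    (hl : IsConnectedOrdering G l) : numColors G l = 2 := by
  obtain ⟨C⟩ := hb
  have hC : ∀ {a b : V}, G.Adj a b → C a ≠ C b := fun h => C.valid h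
  obtain ⟨x, y, hxy⟩ := he
  have hne : l ≠ [] := by
    intro h
    have := hl.1.2 x
    simp [h] at this
  have vals := ff_val G C hC l hne hl.1.1 hl.2
  refine le_antisymm ?_ ?_
  · apply Finset.sup_le
    intro v _
    rw [vals v]
    split_ifs <;> omega
  · set b := C (l.head hne) with hbdef
    obtain ⟨z, hz, hzne⟩ : ∃ z, z ∈ l ∧ C z ≠ b := by
      rcases eq_or_ne (C x) b with h | h
      · exact ⟨y, hl.1.2 y, by rw [← h]; exact (hC hxy).symm⟩
      · exact ⟨x, hl.1.2 x, h⟩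
    have : firstFit G l z = 2 := by rw [vals z]; simp [hz, hzne]
    calc (2 : ℕ) = firstFit G l z := this.symm
      _ ≤ Finset.univ.sup (firstFit G l) := Finset.le_sup (Finset.mem_univ z)

private lemma exists_connOrd {V : Type*} [Fintype V] [DecidableEq V] (G : SimpleGraph V)
    (hc : G.Connected) : ∃ l : List V, IsConnectedOrdering G l := by
  classical
  obtain ⟨r⟩ := hc.nonempty
  set le : V → V → Bool := fun a b => decide (G.dist r a ≤ G.dist r b) with hle
  set l : List V := (Finset.univ.toList (α := V)).mergeSort le with hldef
  have hperm : l.Perm (Finset.univ.toList (α := V)) := List.mergeSort_perm _ _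
  have hnd : l.Nodup := hperm.nodup_iff.mpr (Finset.nodup_toList _)
  have hmem : ∀ v : V, v ∈ l := fun v => hperm.mem_iff.mpr (Finset.mem_toList.mpr (Finset.mem_univ v))
  have hsorted : List.Pairwise (fun a b => le a b = true) l :=
    List.pairwise_mergeSort (by intro a b c; simp [hle]; omega)
      (by intro a b; simp [hle]; omega) _
  have hs : ∀ i j (hi : i < l.length) (hj : j < l.length), i < j →
      G.dist r l[i] ≤ G.dist r l[j] := by
    intro i j hi hj hij
    have := List.pairwise_iff_getElem.mp hsorted i j hi hj hij
    simpa [hle] using this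
  refine ⟨l, ⟨hnd, hmem⟩, ?_⟩
  intro i hi hi0
  set v := l.get ⟨i, hi⟩ with hv
  have hvi : l[i] = v := rfl
  have hreach : G.Reachable r v := hc.preconnected r v
  have hdpos : 0 < G.dist r v := by
    by_contra h
    push_neg at h
    have h' : G.dist r v = 0 := Nat.le_zero.mp h
    have hvr : v = r := by
      rcases SimpleGraph.dist_eq_zero_iff_eq_or_not_reachable.mp h' with h1 | h1
      · exact h1.symm
      · exact absurd hreach h1
    have h0 : 0 < l.length := by omega
    have hd0 : G.dist r l[0] ≤ G.dist r l[i] := hs 0 i h0 hi hi0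
    rw [hvi, h'] at hd0
    have h0r : l[0] = r := by
      rcases SimpleGraph.dist_eq_zero_iff_eq_or_not_reachable.mp (Nat.le_zero.mp hd0) with h1 | h1
      · exact h1.symm
      · exact absurd (hc.preconnected r l[0]) h1
    have : l[0] = l[i] := by rw [h0r, hvi, hvr]
    have := hnd.getElem_inj_iff.mp this
    omega
  obtain ⟨p, hp⟩ := hreach.exists_walk_length_eq_dist
  -- extract last edge of p
  have hrev : p.reverse.length = G.dist r v := by rw [SimpleGraph.Walk.length_reverse, hp]
  have hvr : v ≠ r := by
    intro h
    rw [h, SimpleGraph.dist_self] at hdpos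
    omega
  obtain ⟨u, hadj, q, hq⟩ := SimpleGraph.Walk.exists_eq_cons_of_ne hvr p.reverse
  have hlen : q.length + 1 = G.dist r v := by
    rw [hq] at hrev
    simpa using hrev
  have hdu : G.dist r u < G.dist r v := by
    have : G.dist r u ≤ q.reverse.length := SimpleGraph.dist_le q.reverse
    rw [SimpleGraph.Walk.length_reverse] at this
    omega
  obtain ⟨j, hj, hju⟩ := List.getElem_of_mem (hmem u)
  have hji : j < i := by
    by_contra hji
    push_neg at hji
    rcases eq_or_lt_of_le hji with rfl | hlt
    · rw [hvi] at hju
      exact (G.ne_of_adj hadj) hju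
    · have := hs i j hi hj hlt
      rw [hju, hvi] at this
      omega
  refine ⟨u, ?_, hadj.symm⟩
  have hjt : j < (l.take i).length := by
    rw [List.length_take]
    omega
  have : (l.take i)[j] = u := by rw [List.getElem_take, hju]
  rw [← this]
  exact List.getElem_mem hjt

theorem stmt1 {V : Type*} [Fintype V] [DecidableEq V] (G : SimpleGraph V)
    (hc : G.Connected) (hb : G.Colorable 2) (he : ∃ u v : V, G.Adj u v) :
    connGrundy G = 2 := by
  obtain ⟨l0, hl0⟩ := exists_connOrd G hc
  have hset : {k | ∃ l : List V, IsConnectedOrdering G l ∧ k = numColors G l} = {2} := by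
    ext k
    simp only [Set.mem_setOf_eq, Set.mem_singleton_iff]
    constructor
    · rintro ⟨l, hl, rfl⟩
      exact numColors_eq_two G hb he l hl
    · rintro rfl
      exact ⟨l0, hl0, (numColors_eq_two G hb he l0 hl0).symm⟩
  rw [connGrundy, hset, csSup_singleton]
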